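/- Let f, f_1, f_2, … : 𝐗 → ℝ be Borel functions, each μ-integrable, with f_k → f μ-almost everywhere, and suppose in addition there is g ∈ L¹(μ) with |f_k| ≤ g μ-almost everywhere for all k. Then F_k^{·}(f_k) → E_μ[f | 𝔍] in L¹(μ): ∫ |F_k^x(f_k) − E_μ[f | 𝔍](x)| μ(dx) → 0 as k → ∞. -/

import Mathlib

open MeasureTheory Filter Topology
open scoped Pointwise ENNReal

/-- The σ-algebra of Borel sets invariant under every transformation `T φ`. -/
def invSigma {G X : Type*} [MeasurableSpace X] (T : G → X → X) : MeasurableSpace X where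
  MeasurableSet' A := MeasurableSet A ∧ ∀ φ, T φ ⁻¹' A = A
  measurableSet_empty := ⟨MeasurableSet.empty, fun _ => Set.preimage_empty⟩
  measurableSet_compl A hA := ⟨hA.1.compl, fun φ => by
    rw [Set.preimage_compl, hA.2 φ]⟩
  measurableSet_iUnion s hs := ⟨MeasurableSet.iUnion fun i => (hs i).1, fun φ => by
    rw [Set.preimage_iUnion]
    exact Set.iUnion_congr fun i => (hs i).2 φ⟩

section Aux

set_option linter.unusedSectionVars false

variable {Xs : Type*} [MeasurableSpace Xs] {μ : Measure Xs}
  {G : Type*} [Group G] [Countable G] [DecidableEq G] {T : G → Xs → Xs}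

theorem invSigma_le' : invSigma T ≤ ‹MeasurableSpace Xs› := fun _ hA => hA.1

theorem integral_comp_T (hTmeas : ∀ φ, Measurable (T φ)) (hTinv : ∀ φ, Measure.map (T φ) μ = μ)
    (φ : G) {h : Xs → ℝ} (hmeas : AEStronglyMeasurable h μ) :
    ∫ x, h (T φ x) ∂μ = ∫ x, h x ∂μ := by
  conv_rhs => rw [← hTinv φ]
  rw [integral_map (hTmeas φ).aemeasurable (by rwa [hTinv φ])]

theorem integrable_comp_T (hTmeas : ∀ φ, Measurable (T φ)) (hTinv : ∀ φ, Measure.map (T φ) μ = μ)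
    (φ : G) {h : Xs → ℝ} (hint : Integrable h μ) :
    Integrable (fun x => h (T φ x)) μ :=
  memLp_one_iff_integrable.1
    ((memLp_one_iff_integrable.2 hint).comp_measurePreserving ⟨hTmeas φ, hTinv φ⟩)

theorem integrable_avg (hTmeas : ∀ φ, Measurable (T φ)) (hTinv : ∀ φ, Measure.map (T φ) μ = μ)
    (s : Finset G) {h : Xs → ℝ} (hint : Integrable h μ) :
    Integrable (fun x => (∑ φ ∈ s, h (T φ x)) / (s.card : ℝ)) μ :=
  (integrable_finset_sum s fun φ _ => integrable_comp_T hTmeas hTinv φ hint).div_const _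

/-- Contraction property of the averaging operator on L¹. -/
theorem integral_abs_avg_le
    (hTmeas : ∀ φ, Measurable (T φ)) (hTinv : ∀ φ, Measure.map (T φ) μ = μ)
    (s : Finset G) (hs : s.Nonempty) {h : Xs → ℝ} (hint : Integrable h μ) :
    ∫ x, |(∑ φ ∈ s, h (T φ x)) / (s.card : ℝ)| ∂μ ≤ ∫ x, |h x| ∂μ := by
  have hc : (0:ℝ) < (s.card : ℝ) := by exact_mod_cast Finset.card_pos.2 hs
  have h1 : ∀ φ : G, Integrable (fun x => |h (T φ x)|) μ := fun φ =>
    (integrable_comp_T hTmeas hTinv φ hint).abs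
  calc ∫ x, |(∑ φ ∈ s, h (T φ x)) / (s.card : ℝ)| ∂μ
      ≤ ∫ x, (∑ φ ∈ s, |h (T φ x)|) / (s.card : ℝ) ∂μ := by
        refine integral_mono ((integrable_avg hTmeas hTinv s hint).abs) ?_ ?_
        · exact (integrable_finset_sum s fun φ _ => h1 φ).div_const _
        · intro x
          simp only []
          rw [abs_div, abs_of_pos hc]
          exact div_le_div_of_nonneg_right (Finset.abs_sum_le_sum_abs _ _) hc.le
    _ = (∑ φ ∈ s, ∫ x, |h (T φ x)| ∂μ) / (s.card : ℝ) := by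
        rw [integral_div, integral_finset_sum s fun φ _ => h1 φ]
    _ = ∫ x, |h x| ∂μ := by
        have : ∀ φ ∈ s, ∫ x, |h (T φ x)| ∂μ = ∫ x, |h x| ∂μ := fun φ _ =>
          integral_comp_T hTmeas hTinv φ hint.abs.aestronglyMeasurable
        rw [Finset.sum_congr rfl this, Finset.sum_const, nsmul_eq_mul]
        field_simp

/-- An a.e.-invariant function has an a.e. version measurable w.r.t. the invariant σ-algebra. -/
theorem aeStronglyMeasurable'_invSigma
    (hTmeas : ∀ φ, Measurable (T φ)) (hTid : ∀ x, T 1 x = x)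
    (hTcomp : ∀ φ ψ x, T (φ * ψ) x = T φ (T ψ x)) (hTinv : ∀ φ, Measure.map (T φ) μ = μ)
    {h : Xs → ℝ} (hmeas : AEStronglyMeasurable h μ)
    (hinv : ∀ φ, (fun x => h (T φ x)) =ᵐ[μ] h) :
    AEStronglyMeasurable[invSigma T] h μ := by
  classical
  obtain ⟨h₀, h₀sm, hh₀⟩ := hmeas
  have h₀m : Measurable h₀ := h₀sm.measurable
  have hmp : ∀ φ, MeasurePreserving (T φ) μ μ := fun φ => ⟨hTmeas φ, hTinv φ⟩
  have h₀inv : ∀ φ, (fun x => h₀ (T φ x)) =ᵐ[μ] h₀ := by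
    intro φ
    have h1 : (fun x => h₀ (T φ x)) =ᵐ[μ] fun x => h (T φ x) :=
      (hmp φ).quasiMeasurePreserving.ae_eq_comp hh₀.symm
    exact h1.trans ((hinv φ).trans hh₀)
  set N : Set Xs := ⋃ φ : G, {x | h₀ (T φ x) ≠ h₀ x} with hN
  have hNmeas : MeasurableSet N :=
    MeasurableSet.iUnion fun φ => (measurableSet_eq_fun (h₀m.comp (hTmeas φ)) h₀m).compl
  have hNnull : μ N = 0 := measure_iUnion_null fun φ => (h₀inv φ)
  set Ns : Set Xs := ⋃ φ : G, T φ ⁻¹' N with hNs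
  have hNsmeas : MeasurableSet Ns := MeasurableSet.iUnion fun φ => (hTmeas φ) hNmeas
  have hNsnull : μ Ns = 0 := measure_iUnion_null fun φ => by
    rw [(hmp φ).measure_preimage hNmeas.nullMeasurableSet]; exact hNnull
  have hNsinv : ∀ φ, T φ ⁻¹' Ns = Ns := by
    intro φ
    have h1 : T φ ⁻¹' Ns = ⋃ ψ : G, T (ψ * φ) ⁻¹' N := by
      rw [hNs, Set.preimage_iUnion]
      refine Set.iUnion_congr fun ψ => ?_
      ext x
      simp [Set.mem_preimage, hTcomp ψ φ x]
    rw [h1, hNs]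
    exact (Equiv.mulRight φ).iSup_comp (g := fun ψ => T ψ ⁻¹' N)
  set h' : Xs → ℝ := fun x => if x ∈ Ns then 0 else h₀ x with hh'
  have hinvpt : ∀ φ x, h' (T φ x) = h' x := by
    intro φ x
    by_cases hx : x ∈ Ns
    · have h2 : T φ x ∈ Ns := by rw [← hNsinv φ] at hx; exact hx
      simp [hh', hx, h2]
    · have h1 : T φ x ∉ Ns := fun hc => hx (by rw [← hNsinv φ]; exact hc)
      have h2 : x ∉ N := fun hc =>
        hx (Set.mem_iUnion.2 ⟨1, by rw [Set.mem_preimage, hTid x]; exact hc⟩)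
      have h3 : h₀ (T φ x) = h₀ x := by
        by_contra hne
        exact h2 (Set.mem_iUnion.2 ⟨φ, hne⟩)
      simp [hh', hx, h1, h3]
  have h'meas : Measurable h' := Measurable.ite hNsmeas measurable_const h₀m
  have hm' : @Measurable Xs ℝ (invSigma T) _ h' := by
    intro t ht
    refine ⟨h'meas ht, fun φ => ?_⟩
    ext x
    simp only [Set.mem_preimage]
    rw [hinvpt φ x]
  refine ⟨h', hm'.stronglyMeasurable, hh₀.trans ?_⟩
  have hae : ∀ᵐ x ∂μ, x ∉ Ns := by
    rw [ae_iff]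
    simpa using hNsnull
  filter_upwards [hae] with x hx
  simp [hh', hx]

/-- Coercion of a finite sum in `Lp`. -/
theorem Lp_coeFn_finset_sum {E : Type*} [NormedAddCommGroup E] {p : ENNReal} {ι : Type*}
    (s : Finset ι) (g : ι → Lp E p μ) :
    ((∑ i ∈ s, g i : Lp E p μ) : Xs → E) =ᵐ[μ] fun x => ∑ i ∈ s, g i x := by
  classical
  induction s using Finset.induction_on with
  | empty => simpa [Pi.zero_def] using Lp.coeFn_zero (E := E) (p := p) (μ := μ)
  | insert a s' ha ih =>
    rw [Finset.sum_insert ha]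
    refine (Lp.coeFn_add _ _).trans ?_
    filter_upwards [ih] with x hx
    simp only [Pi.add_apply, hx]
    rw [Finset.sum_insert ha]

end Aux

set_option maxHeartbeats 2000000 in
/-- L² mean ergodic theorem along a Følner sequence, in the form of L¹ convergence of averages
of an `L²` function to its conditional expectation on the invariant σ-algebra. -/
theorem l2_mean_ergodic
    {Xs : Type*} [MeasurableSpace Xs] (μ : Measure Xs) [IsProbabilityMeasure μ]
    {G : Type*} [Group G] [Countable G] [DecidableEq G]
    (T : G → Xs → Xs)
    (hTmeas : ∀ φ, Measurable (T φ))
    (hTid : ∀ x, T 1 x = x)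
    (hTcomp : ∀ φ ψ x, T (φ * ψ) x = T φ (T ψ x))
    (hTinv : ∀ φ, Measure.map (T φ) μ = μ)
    (A : ℕ → Finset G) (hA : ∀ k, (A k).Nonempty)
    (hFolner : ∀ φ : G,
      Tendsto (fun k => ((((A k).image fun g => φ * g) ∩ A k).card : ℝ) / ((A k).card : ℝ))
        atTop (𝓝 1))
    (f : Xs → ℝ) (hfint : Integrable f μ) (hf2 : MemLp f 2 μ) :
    Tendsto
      (fun k => ∫ x, |(∑ φ ∈ A k, f (T φ x)) / ((A k).card : ℝ) - (μ[f | invSigma T]) x| ∂μ)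
      atTop (𝓝 0) := by
  classical
  have hmp : ∀ φ, MeasurePreserving (T φ) μ μ := fun φ => ⟨hTmeas φ, hTinv φ⟩
  set U : G → (Lp ℝ 2 μ →ₗᵢ[ℝ] Lp ℝ 2 μ) :=
    fun φ => Lp.compMeasurePreservingₗᵢ ℝ (T φ) (hmp φ) with hU
  have hUcoe : ∀ φ (u : Lp ℝ 2 μ), (U φ u : Xs → ℝ) =ᵐ[μ] fun x => u (T φ x) :=
    fun φ u => Lp.coeFn_compMeasurePreserving u (hmp φ)
  have hUcomp : ∀ (φ ψ : G) (u : Lp ℝ 2 μ), U ψ (U φ u) = U (φ * ψ) u := by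
    intro φ ψ u
    apply Lp.ext
    have h1 : (U ψ (U φ u) : Xs → ℝ) =ᵐ[μ] fun x => u (T φ (T ψ x)) := by
      have h2 := (hmp ψ).quasiMeasurePreserving.ae_eq_comp (hUcoe φ u)
      filter_upwards [hUcoe ψ (U φ u), h2] with x hx1 hx2
      rw [hx1]
      simpa using hx2
    have h3 : (U (φ * ψ) u : Xs → ℝ) =ᵐ[μ] fun x => u (T φ (T ψ x)) := by
      filter_upwards [hUcoe (φ * ψ) u] with x hx
      rw [hx, hTcomp φ ψ x]
    exact h1.trans h3.symm
  set S : ℕ → Lp ℝ 2 μ → Lp ℝ 2 μ :=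
    fun k u => (((A k).card : ℝ))⁻¹ • ∑ φ ∈ A k, U φ u with hS
  have hcard : ∀ k, (0:ℝ) < ((A k).card : ℝ) := fun k => by
    exact_mod_cast Finset.card_pos.2 (hA k)
  have hSadd : ∀ k a b, S k (a + b) = S k a + S k b := by
    intro k a b
    simp only [hS, map_add, Finset.sum_add_distrib, smul_add]
  have hSsub : ∀ k a b, S k (a - b) = S k a - S k b := by
    intro k a b
    simp only [hS, map_sub, Finset.sum_sub_distrib, smul_sub]
  have hSsmul : ∀ (k) (c : ℝ) (a), S k (c • a) = c • S k a := by
    intro k c a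
    have h1 : ∀ φ : G, U φ (c • a) = c • U φ a := fun φ => (U φ).map_smul c a
    simp only [hS]
    rw [Finset.sum_congr rfl fun φ _ => h1 φ, ← Finset.smul_sum, smul_comm]
  have hSzero : ∀ k, S k 0 = 0 := fun k => by simp [hS]
  have hSnorm : ∀ k u, ‖S k u‖ ≤ ‖u‖ := by
    intro k u
    calc ‖S k u‖ = ‖(((A k).card : ℝ))⁻¹‖ * ‖∑ φ ∈ A k, U φ u‖ := norm_smul _ _
      _ ≤ (((A k).card : ℝ))⁻¹ * ∑ φ ∈ A k, ‖U φ u‖ := by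
          rw [Real.norm_eq_abs, abs_of_pos (by positivity)]
          exact mul_le_mul_of_nonneg_left (norm_sum_le _ _) (by positivity)
      _ = (((A k).card : ℝ))⁻¹ * (((A k).card : ℝ) * ‖u‖) := by
          congr 1
          rw [Finset.sum_congr rfl fun φ _ => (U φ).norm_map u, Finset.sum_const, nsmul_eq_mul]
      _ = ‖u‖ := by field_simp
  have hSfix : ∀ (k) (u : Lp ℝ 2 μ), (∀ φ, U φ u = u) → S k u = u := by
    intro k u hu
    simp only [hS]
    rw [Finset.sum_congr rfl fun φ _ => hu φ, Finset.sum_const, ← Nat.cast_smul_eq_nsmul ℝ,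
      smul_smul, inv_mul_cancel₀ (hcard k).ne', one_smul]
  -- coboundaries are averaged to zero
  have hScob : ∀ (φ : G) (u : Lp ℝ 2 μ), Tendsto (fun k => S k (u - U φ u)) atTop (𝓝 0) := by
    intro φ u
    set B : ℕ → Finset G := fun k => (A k).image fun g => φ * g with hB
    have hinj : Function.Injective fun g : G => φ * g := fun a b h => by
      simpa using mul_left_cancel h
    have hcardB : ∀ k, (B k).card = (A k).card := fun k =>
      Finset.card_image_of_injective _ hinj
    have key : ∀ k, S k (u - U φ u) =
        (((A k).card : ℝ))⁻¹ •
          ((∑ ψ ∈ A k \ B k, U ψ u) - ∑ ψ ∈ B k \ A k, U ψ u) := by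
      intro k
      have h1 : ∀ ψ : G, U ψ (u - U φ u) = U ψ u - U (φ * ψ) u := fun ψ => by
        rw [map_sub, hUcomp φ ψ u]
      simp only [hS]
      rw [Finset.sum_congr rfl fun ψ _ => h1 ψ, Finset.sum_sub_distrib]
      congr 1
      rw [Finset.sum_sdiff_sub_sum_sdiff]
      congr 1
      have hBk : B k = (A k).image fun g => φ * g := rfl
      have h5 : ∑ x ∈ B k, (U x) u = ∑ ψ ∈ A k, (U (φ * ψ)) u := by
        rw [hBk]
        exact Finset.sum_image fun a _ b _ h => hinj h
      exact h5.symm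
    have hb : ∀ k, ‖S k (u - U φ u)‖ ≤
        2 * (1 - ((B k ∩ A k).card : ℝ) / ((A k).card : ℝ)) * ‖u‖ := by
      intro k
      have hc1 : ((A k \ B k).card : ℝ) = ((A k).card : ℝ) - ((B k ∩ A k).card : ℝ) := by
        have h2 := Finset.card_sdiff_add_card_inter (A k) (B k)
        have h3 : (A k ∩ B k).card = (B k ∩ A k).card := by rw [Finset.inter_comm]
        have h4 : ((A k \ B k).card : ℝ) + ((B k ∩ A k).card : ℝ) = ((A k).card : ℝ) := by
          exact_mod_cast h3 ▸ h2
        linarith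
      have hc2 : ((B k \ A k).card : ℝ) = ((A k).card : ℝ) - ((B k ∩ A k).card : ℝ) := by
        have h2 := Finset.card_sdiff_add_card_inter (B k) (A k)
        have h4 : ((B k \ A k).card : ℝ) + ((B k ∩ A k).card : ℝ) = ((A k).card : ℝ) := by
          rw [← hcardB k]
          exact_mod_cast h2
        linarith
      rw [key k]
      calc ‖(((A k).card : ℝ))⁻¹ • ((∑ ψ ∈ A k \ B k, U ψ u) - ∑ ψ ∈ B k \ A k, U ψ u)‖
          = (((A k).card : ℝ))⁻¹ * ‖(∑ ψ ∈ A k \ B k, U ψ u) - ∑ ψ ∈ B k \ A k, U ψ u‖ := by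
            rw [norm_smul, Real.norm_eq_abs, abs_of_pos (by positivity)]
        _ ≤ (((A k).card : ℝ))⁻¹ *
            (((A k \ B k).card : ℝ) * ‖u‖ + ((B k \ A k).card : ℝ) * ‖u‖) := by
            refine mul_le_mul_of_nonneg_left ?_ (by positivity)
            refine (norm_sub_le _ _).trans (add_le_add ?_ ?_) <;>
            · refine (norm_sum_le _ _).trans ?_
              rw [Finset.sum_congr rfl fun ψ _ => (U ψ).norm_map u, Finset.sum_const,
                nsmul_eq_mul]
        _ = 2 * (1 - ((B k ∩ A k).card : ℝ) / ((A k).card : ℝ)) * ‖u‖ := by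
            rw [hc1, hc2]
            field_simp
            ring
    have htend : Tendsto
        (fun k => 2 * (1 - ((B k ∩ A k).card : ℝ) / ((A k).card : ℝ)) * ‖u‖) atTop (𝓝 0) := by
      have h0 : Tendsto (fun k => (1:ℝ) - ((B k ∩ A k).card : ℝ) / ((A k).card : ℝ))
          atTop (𝓝 0) := by
        have h1 := (tendsto_const_nhds (x := (1:ℝ)) (f := atTop (α := ℕ))).sub (hFolner φ)
        have h3 : (1:ℝ) - 1 = 0 := by norm_num
        rw [h3] at h1
        exact h1
      have h2 := (h0.const_mul 2).mul_const ‖u‖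
      have h4 : (2:ℝ) * 0 * ‖u‖ = 0 := by ring
      rw [h4] at h2
      exact h2
    exact squeeze_zero_norm hb htend
  -- the invariant subspace
  set V : Submodule ℝ (Lp ℝ 2 μ) :=
    ⨅ φ : G, LinearMap.eqLocus ((U φ).toLinearMap) (LinearMap.id) with hV
  have hVmem : ∀ u : Lp ℝ 2 μ, u ∈ V ↔ ∀ φ, U φ u = u := by
    intro u
    simp [hV, Submodule.mem_iInf, LinearMap.mem_eqLocus]
  have hVclosed : IsClosed (V : Set (Lp ℝ 2 μ)) := by
    have h1 : (V : Set (Lp ℝ 2 μ)) = ⋂ φ : G, {u | U φ u = u} := by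
      ext u
      simp only [SetLike.mem_coe, hVmem u, Set.mem_iInter, Set.mem_setOf_eq]
    rw [h1]
    exact isClosed_iInter fun φ => isClosed_eq (U φ).continuous continuous_id
  haveI : CompleteSpace V := hVclosed.completeSpace_coe
  set W : Submodule ℝ (Lp ℝ 2 μ) :=
    Submodule.span ℝ {w | ∃ (u : Lp ℝ 2 μ) (φ : G), w = u - U φ u} with hW
  have hWV : Wᗮ ≤ V := by
    intro g hg
    rw [Submodule.mem_orthogonal] at hg
    rw [hVmem]
    intro φ
    have h1 : (inner ℝ (g - U φ g) g : ℝ) = 0 :=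
      hg _ (Submodule.subset_span ⟨g, φ, rfl⟩)
    have h2 : (inner ℝ ((U φ) g) g : ℝ) = inner ℝ g g := by
      rw [inner_sub_left, sub_eq_zero] at h1
      exact h1.symm
    have h3 : ‖(U φ) g - g‖ ^ 2 = 0 := by
      rw [norm_sub_sq_real, (U φ).norm_map, h2, real_inner_self_eq_norm_sq]
      ring
    have h4 : U φ g - g = 0 := by
      rwa [pow_eq_zero_iff two_ne_zero, norm_eq_zero] at h3
    exact sub_eq_zero.1 h4
  have hVW : Vᗮ ≤ W.topologicalClosure := by
    rw [← Submodule.orthogonal_orthogonal_eq_closure]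
    exact Submodule.orthogonal_le hWV
  -- tendsto on the span of coboundaries and on its closure
  have hspan : ∀ w ∈ W, Tendsto (fun k => S k w) atTop (𝓝 0) := by
    intro w hw
    refine Submodule.span_induction
      (p := fun w _ => Tendsto (fun k => S k w) atTop (𝓝 0)) ?_ ?_ ?_ ?_ hw
    · rintro w ⟨u, φ, rfl⟩
      exact hScob φ u
    · simp only [hSzero]
      exact tendsto_const_nhds
    · intro a b _ _ ha hb
      have := ha.add hb
      simp only [hSadd, add_zero] at this ⊢
      exact this
    · intro c a _ ha
      have := ha.const_smul c
      simp only [hSsmul, smul_zero] at this ⊢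
      exact this
  have hclos : ∀ w : Lp ℝ 2 μ, w ∈ W.topologicalClosure →
      Tendsto (fun k => S k w) atTop (𝓝 0) := by
    intro w hw
    have hw' : w ∈ closure (W : Set (Lp ℝ 2 μ)) := by
      rwa [← Submodule.topologicalClosure_coe]
    rw [tendsto_zero_iff_norm_tendsto_zero]
    rw [NormedAddCommGroup.tendsto_nhds_zero]
    intro ε hε
    obtain ⟨w', hw'W, hdist⟩ := Metric.mem_closure_iff.1 hw' (ε/2) (by linarith)
    have h2 : Tendsto (fun k => ‖S k w'‖) atTop (𝓝 0) :=
      tendsto_zero_iff_norm_tendsto_zero.1 (hspan w' hw'W)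
    have h3 : ∀ᶠ k in atTop, ‖S k w'‖ < ε/2 :=
      h2.eventually_lt_const (by linarith)
    filter_upwards [h3] with k hk
    have h4 : S k w = S k (w - w') + S k w' := by
      rw [← hSadd]
      congr 1
      abel
    have h5 : ‖S k w‖ < ε := by
      calc ‖S k w‖ ≤ ‖S k (w - w')‖ + ‖S k w'‖ := by rw [h4]; exact norm_add_le _ _
        _ ≤ ‖w - w'‖ + ‖S k w'‖ := add_le_add (hSnorm _ _) le_rfl
        _ < ε/2 + ε/2 := by
            refine add_lt_add ?_ hk
            rwa [dist_eq_norm] at hdist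
        _ = ε := by ring
    simpa using h5
  -- L² convergence to the orthogonal projection
  have hL2 : ∀ Fl : Lp ℝ 2 μ, Tendsto (fun k => S k Fl) atTop
      (𝓝 ((V.orthogonalProjectionOnto Fl : V) : Lp ℝ 2 μ)) := by
    intro Fl
    set P : Lp ℝ 2 μ := ((V.orthogonalProjectionOnto Fl : V) : Lp ℝ 2 μ) with hP
    have hPV : P ∈ V := (V.orthogonalProjectionOnto Fl).2
    have h1 : Fl - P ∈ Vᗮ := Submodule.sub_starProjection_mem_orthogonal (K := V) Fl
    have h2 := hclos _ (hVW h1)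
    have h3 : (fun k => S k Fl) = fun k => P + S k (Fl - P) := by
      funext k
      have h4 : P + S k (Fl - P) = S k P + S k (Fl - P) := by
        rw [hSfix k P fun φ => (hVmem P).1 hPV φ]
      rw [h4, ← hSadd]
      congr 1
      abel
    rw [h3]
    have h5 := (tendsto_const_nhds (x := P) (f := atTop (α := ℕ))).add h2
    rw [add_zero] at h5
    exact h5
  -- identification of the projection with the conditional expectation
  have hle : invSigma T ≤ ‹MeasurableSpace Xs› := invSigma_le'
  haveI : SigmaFinite (μ.trim hle) := inferInstance
  set F : Lp ℝ 2 μ := hf2.toLp f with hF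
  set Pl : Lp ℝ 2 μ := ((V.orthogonalProjectionOnto F : V) : Lp ℝ 2 μ) with hPl
  have hPV : Pl ∈ V := (V.orthogonalProjectionOnto F).2
  have hPint : Integrable (Pl : Xs → ℝ) μ :=
    memLp_one_iff_integrable.1 ((Lp.memLp Pl).mono_exponent one_le_two)
  have hPmeas' : AEStronglyMeasurable[invSigma T] (Pl : Xs → ℝ) μ := by
    refine aeStronglyMeasurable'_invSigma hTmeas hTid hTcomp hTinv
      (Lp.aestronglyMeasurable Pl) ?_
    intro φ
    have h1 := hUcoe φ Pl
    rw [(hVmem Pl).1 hPV φ] at h1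
    exact h1.symm
  have hEq : (Pl : Xs → ℝ) =ᵐ[μ] μ[f | invSigma T] := by
    refine ae_eq_condExp_of_forall_setIntegral_eq hle hfint
      (fun s _ _ => hPint.integrableOn) ?_ hPmeas'
    intro s hs hμs
    have hsB : MeasurableSet s := hs.1
    have hμs' : μ s ≠ ∞ := hμs.ne
    set e : Lp ℝ 2 μ := indicatorConstLp 2 hsB hμs' (1:ℝ) with he
    have heV : e ∈ V := by
      rw [hVmem]
      intro φ
      apply Lp.ext
      refine (hUcoe φ e).trans ?_
      have hi : (e : Xs → ℝ) =ᵐ[μ] s.indicator fun _ => (1:ℝ) := indicatorConstLp_coeFn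
      have hi2 : (fun x => e (T φ x)) =ᵐ[μ]
          fun x => s.indicator (fun _ => (1:ℝ)) (T φ x) := by
        have := (hmp φ).quasiMeasurePreserving.ae_eq_comp hi
        exact this
      refine hi2.trans (EventuallyEq.trans (Eventually.of_forall fun x => ?_) hi.symm)
      have hmemiff : T φ x ∈ s ↔ x ∈ s := by
        conv_rhs => rw [← hs.2 φ]
        rfl
      show s.indicator (fun _ => (1:ℝ)) (T φ x) = s.indicator (fun _ => (1:ℝ)) x
      by_cases hx : x ∈ s
      · rw [Set.indicator_of_mem hx, Set.indicator_of_mem (hmemiff.2 hx)]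
      · rw [Set.indicator_of_notMem hx,
          Set.indicator_of_notMem (fun hc => hx (hmemiff.1 hc))]
    have horth : (inner ℝ e (F - Pl) : ℝ) = 0 := by
      have h1 : F - Pl ∈ Vᗮ := Submodule.sub_starProjection_mem_orthogonal (K := V) F
      exact (Submodule.mem_orthogonal V (F - Pl)).1 h1 e heV
    have h2 : ∫ x in s, (F : Xs → ℝ) x ∂μ = ∫ x in s, (Pl : Xs → ℝ) x ∂μ := by
      have hFin := L2.inner_indicatorConstLp_one (𝕜 := ℝ) hsB hμs' F
      have hPin := L2.inner_indicatorConstLp_one (𝕜 := ℝ) hsB hμs' Pl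
      rw [← hFin, ← hPin]
      rw [inner_sub_right, sub_eq_zero] at horth
      exact horth
    have h3 : ∫ x in s, (F : Xs → ℝ) x ∂μ = ∫ x in s, f x ∂μ :=
      integral_congr_ae (ae_restrict_of_ae (hf2.coeFn_toLp))
    rw [← h2, h3]
  -- converting back to functions
  have hScoe : ∀ k, ((S k F : Lp ℝ 2 μ) : Xs → ℝ) =ᵐ[μ]
      fun x => (∑ φ ∈ A k, f (T φ x)) / ((A k).card : ℝ) := by
    intro k
    have hterm : ∀ φ : G, ((U φ F : Lp ℝ 2 μ) : Xs → ℝ) =ᵐ[μ] fun x => f (T φ x) := by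
      intro φ
      refine (hUcoe φ F).trans ?_
      have := (hmp φ).quasiMeasurePreserving.ae_eq_comp (hf2.coeFn_toLp)
      exact this
    have hsum : ((∑ φ ∈ A k, U φ F : Lp ℝ 2 μ) : Xs → ℝ) =ᵐ[μ]
        fun x => ∑ φ ∈ A k, f (T φ x) := by
      refine (Lp_coeFn_finset_sum (A k) fun φ => U φ F).trans ?_
      have hball : ∀ᵐ x ∂μ, ∀ φ ∈ A k, ((U φ F : Lp ℝ 2 μ) : Xs → ℝ) x = f (T φ x) :=
        (ae_ball_iff (A k).finite_toSet.countable).2 fun φ _ => hterm φ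
      filter_upwards [hball] with x hx
      exact Finset.sum_congr rfl fun φ hφ => hx φ hφ
    have hsm := Lp.coeFn_smul ((((A k).card : ℝ))⁻¹) (∑ φ ∈ A k, U φ F)
    refine hsm.trans ?_
    filter_upwards [hsum] with x hx
    simp only [Pi.smul_apply, smul_eq_mul]
    rw [hx, inv_mul_eq_div]
  have hnorm0 : Tendsto (fun k => ‖S k F - Pl‖) atTop (𝓝 0) := by
    have := hL2 F
    rwa [tendsto_iff_norm_sub_tendsto_zero] at this
  have hIntbound : ∀ k,
      ∫ x, |(∑ φ ∈ A k, f (T φ x)) / ((A k).card : ℝ) - (μ[f | invSigma T]) x| ∂μ ≤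
        ‖S k F - Pl‖ := by
    intro k
    have h1 : (fun x => |(∑ φ ∈ A k, f (T φ x)) / ((A k).card : ℝ) - (μ[f | invSigma T]) x|)
        =ᵐ[μ] fun x => ‖((S k F - Pl : Lp ℝ 2 μ) : Xs → ℝ) x‖ := by
      filter_upwards [hScoe k, hEq, Lp.coeFn_sub (S k F) Pl] with x hx1 hx2 hx3
      rw [Real.norm_eq_abs, hx3, Pi.sub_apply, hx1, hx2]
    rw [integral_congr_ae h1]
    have h2 : ∫ x, ‖((S k F - Pl : Lp ℝ 2 μ) : Xs → ℝ) x‖ ∂μ =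
        (eLpNorm ((S k F - Pl : Lp ℝ 2 μ) : Xs → ℝ) 1 μ).toReal := by
      rw [integral_norm_eq_lintegral_enorm (Lp.aestronglyMeasurable _),
        eLpNorm_one_eq_lintegral_enorm]
    rw [h2, Lp.norm_def]
    exact ENNReal.toReal_mono (Lp.eLpNorm_ne_top _)
      (eLpNorm_le_eLpNorm_of_exponent_le one_le_two (Lp.aestronglyMeasurable _))
  exact squeeze_zero (fun k => integral_nonneg fun x => abs_nonneg _) hIntbound hnorm0

/-- L¹ mean ergodic theorem along a Følner sequence. -/
theorem l1_mean_ergodic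
    {Xs : Type*} [MeasurableSpace Xs] (μ : Measure Xs) [IsProbabilityMeasure μ]
    {G : Type*} [Group G] [Countable G] [DecidableEq G]
    (T : G → Xs → Xs)
    (hTmeas : ∀ φ, Measurable (T φ))
    (hTid : ∀ x, T 1 x = x)
    (hTcomp : ∀ φ ψ x, T (φ * ψ) x = T φ (T ψ x))
    (hTinv : ∀ φ, Measure.map (T φ) μ = μ)
    (A : ℕ → Finset G) (hA : ∀ k, (A k).Nonempty)
    (hFolner : ∀ φ : G,
      Tendsto (fun k => ((((A k).image fun g => φ * g) ∩ A k).card : ℝ) / ((A k).card : ℝ))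
        atTop (𝓝 1))
    (f : Xs → ℝ) (hfint : Integrable f μ) :
    Tendsto
      (fun k => ∫ x, |(∑ φ ∈ A k, f (T φ x)) / ((A k).card : ℝ) - (μ[f | invSigma T]) x| ∂μ)
      atTop (𝓝 0) := by
  classical
  set tr : ℕ → Xs → ℝ := fun n x => max (-(n:ℝ)) (min (f x) (n:ℝ)) with htr
  have htrmeas : ∀ n, AEStronglyMeasurable (tr n) μ := fun n =>
    ((aemeasurable_const.max (hfint.aemeasurable.min aemeasurable_const))).aestronglyMeasurable
  have htrabs : ∀ n x, |tr n x| ≤ |f x| := by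
    intro n x
    rw [abs_le]
    constructor
    · refine le_trans (le_min (neg_abs_le (f x)) ?_) (le_max_right _ _)
      have : (0:ℝ) ≤ (n:ℝ) := by positivity
      have h2 : -|f x| ≤ 0 := neg_nonpos.2 (abs_nonneg _)
      linarith
    · refine max_le ?_ (le_trans (min_le_left _ _) (le_abs_self _))
      have : (0:ℝ) ≤ (n:ℝ) := by positivity
      have h2 : (0:ℝ) ≤ |f x| := abs_nonneg _
      linarith
  have htrint : ∀ n, Integrable (tr n) μ := fun n =>
    hfint.mono (htrmeas n)
      (Eventually.of_forall fun x => by simpa [Real.norm_eq_abs] using htrabs n x)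
  have htr2 : ∀ n, MemLp (tr n) 2 μ := by
    intro n
    refine MemLp.of_bound (htrmeas n) (n:ℝ) (Eventually.of_forall fun x => ?_)
    rw [Real.norm_eq_abs, abs_le]
    have h0 : (0:ℝ) ≤ (n:ℝ) := by positivity
    exact ⟨le_max_left _ _, max_le (by linarith) (min_le_right _ _)⟩
  have htrconv : Tendsto (fun n => ∫ x, |f x - tr n x| ∂μ) atTop (𝓝 0) := by
    have h0 : (0:ℝ) = ∫ _x, (0:ℝ) ∂μ := by simp
    rw [h0]
    refine tendsto_integral_of_dominated_convergence (fun x => 2 * |f x|)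
      (fun n => ((hfint.sub (htrint n)).abs).aestronglyMeasurable)
      ((hfint.abs).const_mul 2) ?_ ?_
    · intro n
      refine Eventually.of_forall fun x => ?_
      rw [Real.norm_eq_abs, abs_abs]
      calc |f x - tr n x| ≤ |f x| + |tr n x| := abs_sub _ _
        _ ≤ |f x| + |f x| := add_le_add le_rfl (htrabs n x)
        _ = 2 * |f x| := by ring
    · refine Eventually.of_forall fun x => ?_
      have hev : ∀ᶠ n : ℕ in atTop, |f x - tr n x| = (0:ℝ) := by
        filter_upwards [eventually_ge_atTop ⌈|f x|⌉₊] with n hn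
        have hn' : |f x| ≤ (n:ℝ) := le_trans (Nat.le_ceil _) (by exact_mod_cast hn)
        rw [abs_le] at hn'
        have heq : tr n x = f x := by
          simp only [htr]
          rw [min_eq_left hn'.2, max_eq_right hn'.1]
        simp [heq]
      exact Tendsto.congr' (hev.mono fun n hn => hn.symm) tendsto_const_nhds
  have hcondbound : ∀ n, ∫ x, |(μ[tr n | invSigma T]) x - (μ[f | invSigma T]) x| ∂μ ≤
      ∫ x, |f x - tr n x| ∂μ := by
    intro n
    have h1 : μ[tr n - f | invSigma T] =ᵐ[μ] μ[tr n | invSigma T] - μ[f | invSigma T] :=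
      condExp_sub (htrint n) hfint _
    calc ∫ x, |(μ[tr n | invSigma T]) x - (μ[f | invSigma T]) x| ∂μ
        = ∫ x, |(μ[tr n - f | invSigma T]) x| ∂μ := by
          refine (integral_congr_ae (h1.mono fun x hx => ?_)).symm
          rw [hx, Pi.sub_apply]
      _ ≤ ∫ x, |(tr n - f) x| ∂μ := integral_abs_condExp_le _
      _ = ∫ x, |f x - tr n x| ∂μ := by
          refine integral_congr_ae (Eventually.of_forall fun x => ?_)
          show |(tr n - f) x| = |f x - tr n x|
          rw [Pi.sub_apply, abs_sub_comm]
  have hb1 : ∀ n k,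
      ∫ x, |(∑ φ ∈ A k, f (T φ x)) / ((A k).card : ℝ) - (μ[f | invSigma T]) x| ∂μ ≤
      (∫ x, |f x - tr n x| ∂μ) +
        ∫ x, |(∑ φ ∈ A k, tr n (T φ x)) / ((A k).card : ℝ) - (μ[f | invSigma T]) x| ∂μ := by
    intro n k
    have hint1 : Integrable (fun x => (∑ φ ∈ A k, f (T φ x)) / ((A k).card : ℝ)) μ :=
      integrable_avg hTmeas hTinv _ hfint
    have hint2 : Integrable (fun x => (∑ φ ∈ A k, tr n (T φ x)) / ((A k).card : ℝ)) μ :=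
      integrable_avg hTmeas hTinv _ (htrint n)
    have hintEf : Integrable (μ[f | invSigma T]) μ := integrable_condExp
    have hsubint : Integrable (fun x => f x - tr n x) μ := hfint.sub (htrint n)
    have hdiff : ∀ x, (∑ φ ∈ A k, f (T φ x)) / ((A k).card : ℝ) -
        (∑ φ ∈ A k, tr n (T φ x)) / ((A k).card : ℝ) =
        (∑ φ ∈ A k, (f (T φ x) - tr n (T φ x))) / ((A k).card : ℝ) := fun x => by
      rw [Finset.sum_sub_distrib, sub_div]
    calc ∫ x, |(∑ φ ∈ A k, f (T φ x)) / ((A k).card : ℝ) - (μ[f | invSigma T]) x| ∂μ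
        ≤ ∫ x, (|(∑ φ ∈ A k, (f (T φ x) - tr n (T φ x))) / ((A k).card : ℝ)| +
            |(∑ φ ∈ A k, tr n (T φ x)) / ((A k).card : ℝ) - (μ[f | invSigma T]) x|) ∂μ := by
          refine integral_mono ((hint1.sub hintEf).abs)
            (((integrable_avg hTmeas hTinv _ hsubint).abs).add ((hint2.sub hintEf).abs)) ?_
          intro x
          simp only []
          rw [← hdiff x]
          exact abs_sub_le _ _ _
      _ = (∫ x, |(∑ φ ∈ A k, (f (T φ x) - tr n (T φ x))) / ((A k).card : ℝ)| ∂μ) +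
            ∫ x, |(∑ φ ∈ A k, tr n (T φ x)) / ((A k).card : ℝ) - (μ[f | invSigma T]) x| ∂μ :=
          integral_add ((integrable_avg hTmeas hTinv _ hsubint).abs) ((hint2.sub hintEf).abs)
      _ ≤ _ := by
          gcongr ?_ + _
          exact integral_abs_avg_le hTmeas hTinv _ (hA k) hsubint
  have hb2 : ∀ n k,
      ∫ x, |(∑ φ ∈ A k, tr n (T φ x)) / ((A k).card : ℝ) - (μ[f | invSigma T]) x| ∂μ ≤
      (∫ x, |(∑ φ ∈ A k, tr n (T φ x)) / ((A k).card : ℝ) - (μ[tr n | invSigma T]) x| ∂μ) +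
        ∫ x, |f x - tr n x| ∂μ := by
    intro n k
    have hint2 : Integrable (fun x => (∑ φ ∈ A k, tr n (T φ x)) / ((A k).card : ℝ)) μ :=
      integrable_avg hTmeas hTinv _ (htrint n)
    have hintEf : Integrable (μ[f | invSigma T]) μ := integrable_condExp
    have hintEt : Integrable (μ[tr n | invSigma T]) μ := integrable_condExp
    calc ∫ x, |(∑ φ ∈ A k, tr n (T φ x)) / ((A k).card : ℝ) - (μ[f | invSigma T]) x| ∂μ
        ≤ ∫ x, (|(∑ φ ∈ A k, tr n (T φ x)) / ((A k).card : ℝ) - (μ[tr n | invSigma T]) x| +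
            |(μ[tr n | invSigma T]) x - (μ[f | invSigma T]) x|) ∂μ := by
          refine integral_mono ((hint2.sub hintEf).abs)
            (((hint2.sub hintEt).abs).add ((hintEt.sub hintEf).abs)) ?_
          intro x
          exact abs_sub_le _ _ _
      _ = (∫ x, |(∑ φ ∈ A k, tr n (T φ x)) / ((A k).card : ℝ) -
              (μ[tr n | invSigma T]) x| ∂μ) +
            ∫ x, |(μ[tr n | invSigma T]) x - (μ[f | invSigma T]) x| ∂μ :=
          integral_add ((hint2.sub hintEt).abs) ((hintEt.sub hintEf).abs)
      _ ≤ _ := add_le_add le_rfl (hcondbound n)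
  rw [Metric.tendsto_atTop]
  intro ε hε
  obtain ⟨n, hn⟩ := (htrconv.eventually_lt_const (show (0:ℝ) < ε/3 by linarith)).exists
  have h2 := l2_mean_ergodic μ T hTmeas hTid hTcomp hTinv A hA hFolner (tr n)
    (htrint n) (htr2 n)
  have h3 := h2.eventually_lt_const (show (0:ℝ) < ε/3 by linarith)
  rw [eventually_atTop] at h3
  obtain ⟨N, hN⟩ := h3
  refine ⟨N, fun k hk => ?_⟩
  have hnn : 0 ≤ ∫ x, |(∑ φ ∈ A k, f (T φ x)) / ((A k).card : ℝ) -
      (μ[f | invSigma T]) x| ∂μ := integral_nonneg fun x => abs_nonneg _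
  rw [Real.dist_eq, sub_zero, abs_of_nonneg hnn]
  have h5 := hb1 n k
  have h6 := hb2 n k
  have h4 := hN k hk
  linarith

/-- **Symmetric law of large numbers, L¹ version** (Theorem `lemma:main`, mean convergence).
Under the hypotheses of the a.s. version, if moreover `|f_k| ≤ g` a.e. for some `g ∈ L¹(μ)`,
the empirical averages converge to the conditional expectation of `f` given the invariant
σ-algebra in `L¹(μ)`. -/
theorem symmetric_lln_L1
    {Xs : Type*} [TopologicalSpace Xs] [PolishSpace Xs] [MeasurableSpace Xs] [BorelSpace Xs]
    (μ : Measure Xs) [IsProbabilityMeasure μ]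
    {G : Type*} [Group G] [Countable G] [DecidableEq G]
    (T : G → Xs → Xs)
    (hTmeas : ∀ φ, Measurable (T φ))
    (hTid : ∀ x, T 1 x = x)
    (hTcomp : ∀ φ ψ x, T (φ * ψ) x = T φ (T ψ x))
    (hTinv : ∀ φ, Measure.map (T φ) μ = μ)
    (A : ℕ → Finset G) (hA : ∀ k, (A k).Nonempty)
    (hFolner : ∀ φ : G,
      Tendsto (fun k => ((((A k).image fun g => φ * g) ∩ A k).card : ℝ) / ((A k).card : ℝ))
        atTop (𝓝 1))
    (hTempered : ∃ c : ℝ, 0 < c ∧ ∀ k,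
      (((((Finset.range k).biUnion fun j => (A j)⁻¹)) * A k).card : ℝ) ≤ c * ((A k).card : ℝ))
    (f : Xs → ℝ) (fk : ℕ → Xs → ℝ)
    (hfmeas : Measurable f) (hfkmeas : ∀ k, Measurable (fk k))
    (hfint : Integrable f μ) (hfkint : ∀ k, Integrable (fk k) μ)
    (hconv : ∀ᵐ x ∂μ, Tendsto (fun k => fk k x) atTop (𝓝 (f x)))
    (g : Xs → ℝ) (hg : Integrable g μ)
    (hdom : ∀ k, ∀ᵐ x ∂μ, |fk k x| ≤ g x) :
    Tendsto
      (fun k => ∫ x, |(∑ φ ∈ A k, fk k (T φ x)) / ((A k).card : ℝ) - (μ[f | invSigma T]) x| ∂μ)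
      atTop (𝓝 0) := by
  have hmain := l1_mean_ergodic μ T hTmeas hTid hTcomp hTinv A hA hFolner f hfint
  set Ef := μ[f | invSigma T] with hEf
  have hintE : Integrable Ef μ := integrable_condExp
  have hsub : ∀ k, Integrable (fun x => fk k x - f x) μ := fun k => (hfkint k).sub hfint
  have ha : Tendsto (fun k => ∫ x, |fk k x - f x| ∂μ) atTop (𝓝 0) := by
    have h0 : (0:ℝ) = ∫ _x, (0:ℝ) ∂μ := by simp
    rw [h0]
    refine tendsto_integral_of_dominated_convergence (fun x => g x + |f x|)
      (fun k => (hsub k).abs.aestronglyMeasurable) (hg.add hfint.abs) ?_ ?_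
    · intro k
      filter_upwards [hdom k] with x hx
      rw [Real.norm_eq_abs, abs_abs]
      calc |fk k x - f x| ≤ |fk k x| + |f x| := abs_sub _ _
        _ ≤ g x + |f x| := add_le_add hx le_rfl
    · filter_upwards [hconv] with x hx
      simpa using (hx.sub (tendsto_const_nhds (x := f x))).abs
  have hbound : ∀ k, ∫ x, |(∑ φ ∈ A k, fk k (T φ x)) / ((A k).card : ℝ) - Ef x| ∂μ ≤
      (∫ x, |fk k x - f x| ∂μ) +
        ∫ x, |(∑ φ ∈ A k, f (T φ x)) / ((A k).card : ℝ) - Ef x| ∂μ := by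
    intro k
    have hint1 : Integrable (fun x => (∑ φ ∈ A k, fk k (T φ x)) / ((A k).card : ℝ)) μ :=
      integrable_avg hTmeas hTinv _ (hfkint k)
    have hint2 : Integrable (fun x => (∑ φ ∈ A k, f (T φ x)) / ((A k).card : ℝ)) μ :=
      integrable_avg hTmeas hTinv _ hfint
    have hdiff : ∀ x, (∑ φ ∈ A k, fk k (T φ x)) / ((A k).card : ℝ) -
        (∑ φ ∈ A k, f (T φ x)) / ((A k).card : ℝ) =
        (∑ φ ∈ A k, (fk k (T φ x) - f (T φ x))) / ((A k).card : ℝ) := by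
      intro x
      rw [Finset.sum_sub_distrib, sub_div]
    calc ∫ x, |(∑ φ ∈ A k, fk k (T φ x)) / ((A k).card : ℝ) - Ef x| ∂μ
        ≤ ∫ x, (|(∑ φ ∈ A k, (fk k (T φ x) - f (T φ x))) / ((A k).card : ℝ)| +
            |(∑ φ ∈ A k, f (T φ x)) / ((A k).card : ℝ) - Ef x|) ∂μ := by
          refine integral_mono ((hint1.sub hintE).abs)
            (((integrable_avg hTmeas hTinv _ (hsub k)).abs).add ((hint2.sub hintE).abs)) ?_
          intro x
          simp only []
          rw [← hdiff x]
          exact abs_sub_le _ _ _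
      _ = (∫ x, |(∑ φ ∈ A k, (fk k (T φ x) - f (T φ x))) / ((A k).card : ℝ)| ∂μ) +
            ∫ x, |(∑ φ ∈ A k, f (T φ x)) / ((A k).card : ℝ) - Ef x| ∂μ :=
          integral_add ((integrable_avg hTmeas hTinv _ (hsub k)).abs) ((hint2.sub hintE).abs)
      _ ≤ _ := by
          gcongr ?_ + _
          exact integral_abs_avg_le hTmeas hTinv _ (hA k) (hsub k)
  have hnn : ∀ k, 0 ≤ ∫ x, |(∑ φ ∈ A k, fk k (T φ x)) / ((A k).card : ℝ) - Ef x| ∂μ :=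
    fun k => integral_nonneg fun x => abs_nonneg _
  simpa using squeeze_zero hnn hbound (by simpa using ha.add hmain)
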